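/- Let G act continuously on locally compact noncompact Hausdorff spaces, with G a locally compact noncompact group, and let x₀ ∈ X. If the map g ↦ g·x₀ tends to infinity as g → ∞ (i.e., for every compact subset L of X there is a compact subset C of G such that g·x₀ ∉ L for g ∉ C), then the orbit G·x₀ is locally closed in X. -/

import Mathlib

/-- If `g ↦ g • x₀` tends to infinity (escapes every compact subset of `X`
outside compact subsets of `G`), then the orbit `G·x₀` is locally closed. -/
theorem stmt6 {G X : Type*} [Group G] [TopologicalSpace G] [IsTopologicalGroup G]
    [LocallyCompactSpace G] [NoncompactSpace G]
    [TopologicalSpace X] [T2Space X] [LocallyCompactSpace X] [NoncompactSpace X]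
    [MulAction G X] [ContinuousSMul G X]
    (x₀ : X)
    (hinf : ∀ L : Set X, IsCompact L → ∃ C : Set G, IsCompact C ∧ ∀ g ∉ C, g • x₀ ∉ L) :
    IsLocallyClosed (MulAction.orbit G x₀) := by
  have hclosed : IsClosed (MulAction.orbit G x₀) := by
    rw [← closure_subset_iff_isClosed]
    intro y hy
    obtain ⟨L, hLnhds, hLcomp⟩ := local_compact_nhds (x := y) (n := Set.univ)
      Filter.univ_mem
    obtain ⟨C, hCcomp, hC⟩ := hinf L hLcomp.2
    have himg : IsCompact ((fun g => g • x₀) '' C) :=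
      hCcomp.image (continuous_id.smul continuous_const)
    have hsub : MulAction.orbit G x₀ ∩ interior L ⊆ (fun g => g • x₀) '' C := by
      rintro z ⟨⟨g, rfl⟩, hz⟩
      by_contra h
      exact hC g (fun hg => h ⟨g, hg, rfl⟩) (interior_subset hz)
    have hy' : y ∈ closure (MulAction.orbit G x₀ ∩ interior L) := by
      have h2 := isOpen_interior.inter_closure (t := MulAction.orbit G x₀) (s := interior L)
        ⟨mem_interior_iff_mem_nhds.2 hLnhds, hy⟩
      rwa [Set.inter_comm] at h2
    have : y ∈ (fun g => g • x₀) '' C :=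
      himg.isClosed.closure_subset ((closure_mono hsub) hy')
    obtain ⟨g, -, rfl⟩ := this
    exact ⟨g, rfl⟩
  exact hclosed.isLocallyClosed
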